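/- Convex envelope of a bilinear monomial (McCormick hull): Let f(x,y) = −xy on Γ = [0,1] × [ℓ,u] with ℓ ≤ u. Then the convex envelope of f on Γ is g(x,y) = max{−ux, ℓ − ℓx − y}. In particular g is convex on Γ, g ≤ f on Γ, and any convex function h on Γ with h ≤ f satisfies h ≤ g. -/

import Mathlib

/-- McCormick hull: the convex envelope of `f(x,y) = -x*y` on
`Γ = [0,1] × [ℓ,u]` is `g(x,y) = max{-u*x, ℓ - ℓ*x - y}`: `g` is convex on `Γ`,
`g ≤ f` on `Γ`, and every convex `h` on `Γ` with `h ≤ f` satisfies `h ≤ g`. -/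
theorem mccormick_convex_envelope (ℓ u : ℝ) (hlu : ℓ ≤ u) :
    let Γ : Set (ℝ × ℝ) := Set.Icc (0 : ℝ) 1 ×ˢ Set.Icc ℓ u
    let f : ℝ × ℝ → ℝ := fun z => -(z.1 * z.2)
    let g : ℝ × ℝ → ℝ := fun z => max (-(u * z.1)) (ℓ - ℓ * z.1 - z.2)
    ConvexOn ℝ Γ g ∧ (∀ z ∈ Γ, g z ≤ f z) ∧
      ∀ h : ℝ × ℝ → ℝ, ConvexOn ℝ Γ h → (∀ z ∈ Γ, h z ≤ f z) → ∀ z ∈ Γ, h z ≤ g z := by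
  intro Γ f g
  have hΓ : Convex ℝ Γ := (convex_Icc (0:ℝ) 1).prod (convex_Icc ℓ u)
  have affone : ConvexOn ℝ Γ (fun z : ℝ × ℝ => -(u * z.1)) := by
    refine ⟨hΓ, fun x hx y hy a b ha hb hab => le_of_eq ?_⟩
    have hb' : b = 1 - a := by linarith
    subst hb'
    simp only [Prod.fst_add, Prod.smul_fst, smul_eq_mul]
    ring
  have afftwo : ConvexOn ℝ Γ (fun z : ℝ × ℝ => ℓ - ℓ * z.1 - z.2) := by
    refine ⟨hΓ, fun x hx y hy a b ha hb hab => le_of_eq ?_⟩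
    have hb' : b = 1 - a := by linarith
    subst hb'
    simp only [Prod.fst_add, Prod.snd_add, Prod.smul_fst, Prod.smul_snd, smul_eq_mul]
    ring
  refine ⟨affone.sup afftwo, fun z hz => ?_, fun h hconv hle z hz => ?_⟩
  · obtain ⟨⟨hx0, hx1⟩, ⟨hyl, hyu⟩⟩ := hz
    apply max_le
    · simp only [f, neg_le_neg_iff]
      nlinarith
    · simp only [f]
      nlinarith
  · obtain ⟨⟨hx0, hx1⟩, ⟨hyl, hyu⟩⟩ := hz
    obtain ⟨x, y⟩ := z
    simp only at hx0 hx1 hyl hyu ⊢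
    rcases eq_or_lt_of_le hx0 with h0 | h0
    · -- x = 0
      subst h0
      have hf := hle ((0:ℝ), y) ⟨⟨le_refl 0, zero_le_one⟩, ⟨hyl, hyu⟩⟩
      simp only [f] at hf
      calc h ((0:ℝ), y) ≤ -((0:ℝ) * y) := hf
        _ = -(u * 0) := by ring
        _ ≤ g ((0:ℝ), y) := le_max_left _ _
    rcases eq_or_lt_of_le hx1 with h1 | h1
    · -- x = 1
      subst h1
      have hf := hle ((1:ℝ), y) ⟨⟨zero_le_one, le_refl 1⟩, ⟨hyl, hyu⟩⟩
      simp only [f] at hf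
      calc h ((1:ℝ), y) ≤ -((1:ℝ) * y) := hf
        _ = ℓ - ℓ * 1 - y := by ring
        _ ≤ g ((1:ℝ), y) := le_max_right _ _
    -- 0 < x < 1
    rcases le_total (ℓ - ℓ * x - y) (-(u * x)) with hcase | hcase
    · -- g = -ux ; combo of (0, y₀) and (1, u)
      set y₀ : ℝ := (y - x * u) / (1 - x) with hy₀
      have hx1' : (0:ℝ) < 1 - x := by linarith
      have hy₀mem : y₀ ∈ Set.Icc ℓ u := by
        constructor
        · rw [hy₀, le_div_iff₀ hx1']; nlinarith
        · rw [hy₀, div_le_iff₀ hx1']; nlinarith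
      have hm1 : ((0:ℝ), y₀) ∈ Γ := ⟨⟨le_refl 0, zero_le_one⟩, hy₀mem⟩
      have hm2 : ((1:ℝ), u) ∈ Γ := ⟨⟨zero_le_one, le_refl 1⟩, ⟨hlu, le_refl u⟩⟩
      have hcomb : (1 - x) • ((0:ℝ), y₀) + x • ((1:ℝ), u) = (x, y) := by
        rw [Prod.ext_iff]
        refine ⟨by simp, ?_⟩
        simp only [Prod.snd_add, Prod.smul_snd, smul_eq_mul, hy₀]
        field_simp
        ring
      have hcv := hconv.2 hm1 hm2 (le_of_lt hx1') hx0 (show (1-x)+x = 1 by ring)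
      rw [hcomb] at hcv
      have h1v : h ((0:ℝ), y₀) ≤ 0 := by simpa [f] using hle _ hm1
      have h2v : h ((1:ℝ), u) ≤ -u := by simpa [f] using hle _ hm2
      have hval : h (x, y) ≤ (1 - x) * 0 + x * (-u) := by
        refine le_trans hcv ?_
        have := mul_le_mul_of_nonneg_left h1v (le_of_lt hx1')
        have := mul_le_mul_of_nonneg_left h2v hx0
        simp only [smul_eq_mul]
        linarith
      calc h (x, y) ≤ (1 - x) * 0 + x * (-u) := hval
        _ = -(u * x) := by ring
        _ ≤ g (x, y) := le_max_left _ _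
    · -- g = ℓ - ℓx - y ; combo of (0, ℓ) and (1, y₁)
      set y₁ : ℝ := (y - (1 - x) * ℓ) / x with hy₁
      have hy₁mem : y₁ ∈ Set.Icc ℓ u := by
        constructor
        · rw [hy₁, le_div_iff₀ h0]; nlinarith
        · rw [hy₁, div_le_iff₀ h0]; nlinarith
      have hm1 : ((0:ℝ), ℓ) ∈ Γ := ⟨⟨le_refl 0, zero_le_one⟩, ⟨le_refl ℓ, hlu⟩⟩
      have hm2 : ((1:ℝ), y₁) ∈ Γ := ⟨⟨zero_le_one, le_refl 1⟩, hy₁mem⟩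
      have hcomb : (1 - x) • ((0:ℝ), ℓ) + x • ((1:ℝ), y₁) = (x, y) := by
        rw [Prod.ext_iff]
        refine ⟨by simp, ?_⟩
        simp only [Prod.snd_add, Prod.smul_snd, smul_eq_mul, hy₁]
        field_simp
        ring
      have hcv := hconv.2 hm1 hm2 (show (0:ℝ) ≤ 1-x by linarith) hx0 (show (1-x)+x = 1 by ring)
      rw [hcomb] at hcv
      have h1v : h ((0:ℝ), ℓ) ≤ 0 := by simpa [f] using hle _ hm1
      have h2v : h ((1:ℝ), y₁) ≤ -y₁ := by simpa [f] using hle _ hm2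
      have hval : h (x, y) ≤ (1 - x) * 0 + x * (-y₁) := by
        refine le_trans hcv ?_
        have := mul_le_mul_of_nonneg_left h1v (by linarith : (0:ℝ) ≤ 1 - x)
        have := mul_le_mul_of_nonneg_left h2v hx0
        simp only [smul_eq_mul]
        linarith
      have hxne : x ≠ 0 := ne_of_gt h0
      calc h (x, y) ≤ (1 - x) * 0 + x * (-y₁) := hval
        _ = ℓ - ℓ * x - y := by rw [hy₁]; field_simp; ring
        _ ≤ g (x, y) := le_max_right _ _
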